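/- Let G be a graph on n vertices with a vertex x of degree n−1 (adjacent to all other vertices), and let H = G − x. Then G is word-representable if and only if H is a comparability graph. -/

import Mathlib

/-- `D` is an orientation of `G`: directed edges lie on edges of `G`, and each
edge of `G` gets exactly one direction. -/
def IsOrientation {V : Type*} (G : SimpleGraph V) (D : V → V → Prop) : Prop :=
  (∀ u v, D u v → G.Adj u v) ∧ ∀ u v, G.Adj u v → (D u v ↔ ¬ D v u)

/-- `D` is semi-transitive: acyclic, and for every directed path
`p 0 → p 1 → ⋯ → p k` such that `p 0 → p k` is a directed edge, all the
edges `p i → p j` for `i < j ≤ k` are present. -/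
def IsSemiTransitive {V : Type*} (D : V → V → Prop) : Prop :=
  (∀ v, ¬ Relation.TransGen D v v) ∧
    ∀ (k : ℕ) (p : ℕ → V), (∀ i < k, D (p i) (p (i + 1))) → D (p 0) (p k) →
      ∀ i j, i < j → j ≤ k → D (p i) (p j)

/-- `G` is a comparability graph: it admits a transitive orientation. -/
def IsComparability {V : Type*} (G : SimpleGraph V) : Prop :=
  ∃ D, IsOrientation G D ∧ ∀ a b c, D a b → D b c → D a c


/-- Letters `i` and `j` alternate in word `w`. -/
def Alternate {α : Type*} [DecidableEq α] (w : List α) (i j : α) : Prop :=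
  (w.filter (fun x => decide (x = i ∨ x = j))).Chain' (· ≠ ·)

/-- A word `w` over `V(G)` represents `G`. -/
def Represents {V : Type*} [DecidableEq V] (w : List V) (G : SimpleGraph V) : Prop :=
  (∀ v, v ∈ w) ∧ ∀ i j : V, i ≠ j → (Alternate w i j ↔ G.Adj i j)

/-- `G` is word-representable. -/
def WordRepresentable {V : Type*} [DecidableEq V] (G : SimpleGraph V) : Prop :=
  ∃ w, Represents w G


@[simp] theorem chain'_nil_compat {α : Type*} {R : α → α → Prop} : List.Chain' R [] :=
  List.IsChain.nil

@[simp] theorem chain'_singleton_compat {α : Type*} {R : α → α → Prop} (a : α) :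
    List.Chain' R [a] :=
  List.IsChain.singleton a

@[simp] theorem chain'_cons_compat {α : Type*} {R : α → α → Prop} {a b : α} {l : List α} :
    List.Chain' R (a :: b :: l) ↔ R a b ∧ List.Chain' R (b :: l) :=
  List.isChain_cons_cons

theorem chain'_append_compat {α : Type*} {R : α → α → Prop} {l₁ l₂ : List α} :
    List.Chain' R (l₁ ++ l₂) ↔ List.Chain' R l₁ ∧ List.Chain' R l₂ ∧
      ∀ x ∈ l₁.getLast?, ∀ y ∈ l₂.head?, R x y :=
  List.isChain_append

section WordGraphHelpers
open List

variable {α : Type*} [DecidableEq α]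

def pf (a b : α) (l : List α) : List α := l.filter (fun c => decide (c = a ∨ c = b))

lemma pf_nil (a b : α) : pf a b [] = [] := rfl

lemma pf_symm (a b : α) (l : List α) : pf a b l = pf b a l := by
  unfold pf; apply List.filter_congr; intro c _; simp [or_comm]


lemma pf_of_not_mem_left {a b : α} {l : List α} (ha : a ∉ l) :
    pf a b l = List.replicate (l.count b) b := by
  unfold pf
  rw [show l.filter (fun c => decide (c = a ∨ c = b)) = l.filter (fun c => decide (c = b)) from
    List.filter_congr fun c hc => by
      simp only [decide_eq_decide]
      constructor
      · rintro (rfl | rfl)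
        · exact absurd hc ha
        · rfl
      · tauto]
  exact List.filter_eq b

lemma pf_cons_of_left (a b : α) (t : List α) : pf a b (a :: t) = a :: pf a b t := by
  unfold pf; rw [List.filter_cons_of_pos (by simp)]

lemma pf_cons_of_right (a b : α) (t : List α) : pf a b (b :: t) = b :: pf a b t := by
  unfold pf; rw [List.filter_cons_of_pos (by simp)]

lemma pf_cons_of_ne {a b c : α} (t : List α) (h1 : c ≠ a) (h2 : c ≠ b) :
    pf a b (c :: t) = pf a b t := by
  unfold pf; rw [List.filter_cons_of_neg (by simp [h1, h2])]

lemma pf_of_count_one_zero {a b : α} {l : List α} (ha : count a l = 1) (hb : b ∉ l) :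
    pf a b l = [a] := by
  have : pf a b l = replicate (count a l) a := by
    unfold pf
    rw [show l.filter (fun c => decide (c = a ∨ c = b)) = l.filter (fun c => decide (c = a)) from
      List.filter_congr fun c hc => by
        simp only [decide_eq_decide]
        constructor
        · rintro (rfl | rfl)
          · rfl
          · exact absurd hc hb
        · tauto]
    exact List.filter_eq a
  rw [this, ha]; rfl

lemma pf_of_count_zero_one {a b : α} {l : List α} (ha : a ∉ l) (hb : count b l = 1) :
    pf a b l = [b] := by
  rw [pf_symm]; exact pf_of_count_one_zero hb ha

lemma pf_of_count_one_one {a b : α} (hab : a ≠ b) {l : List α}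
    (ha : count a l = 1) (hb : count b l = 1) :
    pf a b l = [a, b] ∨ pf a b l = [b, a] := by
  induction l with
  | nil => simp at ha
  | cons c t ih =>
    rw [List.count_cons] at ha hb
    by_cases hca : c = a
    · subst hca
      left
      have ha' : c ∉ t := by
        apply List.count_eq_zero.mp; simp at ha; omega
      have hb' : count b t = 1 := by
        have : ¬ (c = b) := hab; simp [this] at hb; omega
      rw [pf_cons_of_left, pf_of_count_zero_one ha' hb']
    · by_cases hcb : c = b
      · subst hcb
        right
        have hb' : c ∉ t := by
          apply List.count_eq_zero.mp; simp at hb; omega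
        have ha' : count a t = 1 := by
          simp [hca] at ha; omega
        rw [pf_cons_of_right, pf_of_count_one_zero ha' hb']
      · rw [pf_cons_of_ne t hca hcb]
        simp [hca, hcb] at ha hb
        exact ih ha hb

lemma pf_of_not_mem_not_mem {a b : α} {l : List α} (ha : a ∉ l) (hb : b ∉ l) :
    pf a b l = [] := by
  unfold pf
  rw [List.filter_eq_nil_iff]
  intro c hc
  simp only [decide_eq_true_eq]
  rintro (rfl | rfl)
  · exact ha hc
  · exact hb hc

/-- five shapes for counts ≤ 1 -/
lemma pf_cases {a b : α} (hab : a ≠ b) {l : List α}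
    (ha : count a l ≤ 1) (hb : count b l ≤ 1) :
    pf a b l = [] ∨ pf a b l = [a] ∨ pf a b l = [b] ∨
      pf a b l = [a, b] ∨ pf a b l = [b, a] := by
  rcases Nat.le_one_iff_eq_zero_or_eq_one.mp ha with h1 | h1 <;>
    rcases Nat.le_one_iff_eq_zero_or_eq_one.mp hb with h2 | h2
  · exact Or.inl (pf_of_not_mem_not_mem (List.count_eq_zero.mp h1) (List.count_eq_zero.mp h2))
  · exact Or.inr (Or.inr (Or.inl (pf_of_count_zero_one (List.count_eq_zero.mp h1) h2)))
  · exact Or.inr (Or.inl (pf_of_count_one_zero h1 (List.count_eq_zero.mp h2)))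
  · rcases pf_of_count_one_one hab h1 h2 with h | h
    · exact Or.inr (Or.inr (Or.inr (Or.inl h)))
    · exact Or.inr (Or.inr (Or.inr (Or.inr h)))

lemma mem_pf {a b c : α} {l : List α} : c ∈ pf a b l ↔ c ∈ l ∧ (c = a ∨ c = b) := by
  unfold pf; simp

/-- transitivity of pair-filter ordering, counts = 1 -/
lemma pf_trans {y z u : α} (hyz : y ≠ z) (hzu : z ≠ u) (hyu : y ≠ u) {l : List α}
    (cy : count y l = 1) (cz : count z l = 1) (cu : count u l = 1)
    (h1 : pf y z l = [y, z]) (h2 : pf z u l = [z, u]) : pf y u l = [y, u] := by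
  induction l with
  | nil => simp at cy
  | cons c t ih =>
    rw [List.count_cons] at cy cz cu
    by_cases hcy : c = y
    · subst hcy
      have hy't : c ∉ t := List.count_eq_zero.mp (by simp at cy; omega)
      have cu' : count u t = 1 := by
        have : ¬ (c = u) := hyu; simp [this] at cu; omega
      rw [pf_cons_of_left, pf_of_count_zero_one hy't cu']
    · by_cases hcz : c = z
      · exfalso; subst hcz
        rw [pf_cons_of_left] at h2
        rw [pf_cons_of_right] at h1
        simp at h1
        exact hyz h1.1.symm
      · by_cases hcu : c = u
        · exfalso; subst hcu
          rw [pf_cons_of_right] at h2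
          simp at h2
          exact hzu h2.1.symm
        · rw [pf_cons_of_ne t hcy hcu]
          rw [pf_cons_of_ne t hcy hcz] at h1
          rw [pf_cons_of_ne t hcz hcu] at h2
          simp [hcy, hcz, hcu] at cy cz cu
          exact ih cy cz cu h1 h2

lemma mem_of_pf_shape_left {a b : α} {l : List α} {r : List α} (h : pf a b l = r)
    (hm : a ∈ r) : a ∈ l := by
  have : a ∈ pf a b l := h ▸ hm
  exact (mem_pf.mp this).1

lemma not_mem_of_pf_shape {a b c : α} {l : List α} {r : List α} (h : pf a b l = r)
    (hm : c ∉ r) (hc : c = a ∨ c = b) : c ∉ l := by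
  intro hcl
  exact hm (h ▸ mem_pf.mpr ⟨hcl, hc⟩)

/-- getLast? condition as membership/order condition -/
lemma pf_getLast_iff {a b : α} (hab : a ≠ b) {l : List α}
    (ha : count a l ≤ 1) (hb : count b l ≤ 1) :
    (pf a b l).getLast? ≠ some a ↔ (a ∈ l → b ∈ l ∧ pf a b l = [a, b]) := by
  have hma : a ∈ pf a b l ↔ a ∈ l := by simp [mem_pf]
  have hmb : b ∈ pf a b l ↔ b ∈ l := by simp [mem_pf]
  rcases pf_cases hab ha hb with h | h | h | h | h <;>
    rw [h] at hma hmb ⊢ <;>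
    simp [hab, Ne.symm hab] at hma hmb ⊢ <;>
    tauto

/-- head? condition as membership/order condition -/
lemma pf_head_iff {a b : α} (hab : a ≠ b) {l : List α}
    (ha : count a l ≤ 1) (hb : count b l ≤ 1) :
    (pf a b l).head? ≠ some b ↔ (b ∈ l → a ∈ l ∧ pf a b l = [a, b]) := by
  have hma : a ∈ pf a b l ↔ a ∈ l := by simp [mem_pf]
  have hmb : b ∈ pf a b l ↔ b ∈ l := by simp [mem_pf]
  rcases pf_cases hab ha hb with h | h | h | h | h <;>
    rw [h] at hma hmb ⊢ <;>
    simp [hab, Ne.symm hab] at hma hmb ⊢ <;>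
    tauto

lemma flatten_head_of_all {a b : α} {Ms : List (List α)} (hne : Ms ≠ [])
    (hall : ∀ M ∈ Ms, M = [a, b]) : Ms.flatten.head? = some a := by
  cases Ms with
  | nil => exact absurd rfl hne
  | cons M t =>
    rw [List.flatten_cons, hall M (List.mem_cons_self)]
    rfl

lemma flatten_last_of_all {a b : α} {Ms : List (List α)} (hne : Ms ≠ [])
    (hall : ∀ M ∈ Ms, M = [a, b]) : Ms.flatten.getLast? = some b := by
  induction Ms with
  | nil => exact absurd rfl hne
  | cons M t ih =>
    rw [List.flatten_cons, List.getLast?_append]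
    cases t with
    | nil => simp [hall M (List.mem_cons_self)]
    | cons M' t' =>
      rw [ih (by simp) (fun N hN => hall N (List.mem_cons_of_mem _ hN))]
      rfl

lemma chain'_flatten_iff {a b : α} (hab : a ≠ b) {Ms : List (List α)} (hne : Ms ≠ [])
    (hsh : ∀ M ∈ Ms, M = [a, b] ∨ M = [b, a]) :
    List.Chain' (· ≠ ·) Ms.flatten ↔ (∀ M ∈ Ms, M = [a, b]) ∨ (∀ M ∈ Ms, M = [b, a]) := by
  induction Ms with
  | nil => exact absurd rfl hne
  | cons M t ih =>
    rcases eq_or_ne t [] with rfl | htne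
    · simp only [List.flatten_cons, List.flatten_nil, List.append_nil, List.mem_singleton]
      constructor
      · intro _
        rcases hsh M (List.mem_cons_self) with h | h
        · left; intro N hN; rwa [hN]
        · right; intro N hN; rwa [hN]
      · rintro (h | h) <;> rw [h M rfl] <;> simp [hab, Ne.symm hab]
    · have hsh' : ∀ N ∈ t, N = [a, b] ∨ N = [b, a] :=
        fun N hN => hsh N (List.mem_cons_of_mem _ hN)
      rw [List.flatten_cons, chain'_append_compat, ih htne hsh']
      constructor
      · rintro ⟨_, hall | hall, hlh⟩
        · left
          intro N hN
          rcases List.mem_cons.mp hN with rfl | hN'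
          · rcases hsh N (List.mem_cons_self) with h | h
            · exact h
            · exfalso
              refine hlh a ?_ a ?_ rfl
              · rw [h]; rfl
              · rw [flatten_head_of_all htne hall]; rfl
          · exact hall N hN'
        · right
          intro N hN
          rcases List.mem_cons.mp hN with rfl | hN'
          · rcases hsh N (List.mem_cons_self) with h | h
            · exfalso
              refine hlh b ?_ b ?_ rfl
              · rw [h]; rfl
              · rw [flatten_head_of_all (a := b) (b := a) htne hall]; rfl
            · exact h
          · exact hall N hN'
      · rintro (hall | hall)
        · have hM := hall M (List.mem_cons_self)
          have ht : ∀ N ∈ t, N = [a, b] := fun N hN => hall N (List.mem_cons_of_mem _ hN)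
          refine ⟨by rw [hM]; simp [hab], Or.inl ht, ?_⟩
          intro p hp q hq
          rw [hM] at hp
          rw [flatten_head_of_all htne ht] at hq
          simp at hp hq
          subst hp; subst hq
          exact Ne.symm hab
        · have hM := hall M (List.mem_cons_self)
          have ht : ∀ N ∈ t, N = [b, a] := fun N hN => hall N (List.mem_cons_of_mem _ hN)
          refine ⟨by rw [hM]; simp [Ne.symm hab], Or.inr ht, ?_⟩
          intro p hp q hq
          rw [hM] at hp
          rw [flatten_head_of_all (a := b) (b := a) htne ht] at hq
          simp at hp hq
          subst hp; subst hq
          exact hab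

lemma opt_forall_ne {o : Option α} {a : α} : (∀ p ∈ o, p ≠ a) ↔ o ≠ some a := by
  cases o <;> simp

lemma opt_forall_ne' {o : Option α} {a : α} : (∀ p ∈ o, a ≠ p) ↔ o ≠ some a := by
  cases o <;> simp [eq_comm]

lemma chain'_replicate_iff {y : α} {n : ℕ} :
    List.Chain' (· ≠ ·) (List.replicate n y) ↔ n ≤ 1 := by
  match n with
  | 0 => simp
  | 1 => simp
  | (m+2) =>
    simp only [List.replicate_succ, chain'_cons_compat]
    constructor
    · rintro ⟨h, -⟩; exact absurd rfl h
    · intro h; omega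

lemma chain'_xpattern_iff {x y : α} (hxy : x ≠ y) (cnts : List ℕ) (ck : ℕ) :
    List.Chain' (· ≠ ·)
      (x :: ((cnts.map (fun c => List.replicate c y ++ [x])).flatten ++ List.replicate ck y)) ↔
      (∀ c ∈ cnts, c = 1) ∧ ck ≤ 1 := by
  induction cnts with
  | nil =>
    simp only [List.map_nil, List.flatten_nil, List.nil_append, List.forall_mem_nil, true_and]
    match ck with
    | 0 => simp
    | 1 => simp [hxy]
    | (m+2) =>
      simp only [List.replicate_succ, chain'_cons_compat]
      constructor
      · rintro ⟨-, h, -⟩; exact absurd rfl h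
      · intro h; omega
  | cons c t ih =>
    simp only [List.map_cons, List.flatten_cons, List.append_assoc, List.singleton_append]
    match c with
    | 0 =>
      simp only [List.replicate_zero, List.nil_append, List.singleton_append, List.cons_append,
        chain'_cons_compat, List.forall_mem_cons]
      constructor
      · rintro ⟨h, -⟩; exact absurd rfl h
      · rintro ⟨⟨h, -⟩, -⟩; exact absurd h (by omega)
    | 1 =>
      simp only [List.replicate_one, List.singleton_append, List.cons_append, List.nil_append,
        chain'_cons_compat, ih, List.forall_mem_cons]
      have h1 : x ≠ y := hxy
      have h2 : y ≠ x := Ne.symm hxy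
      tauto
    | (m+2) =>
      simp only [List.replicate_succ, List.cons_append, chain'_cons_compat, List.forall_mem_cons]
      constructor
      · rintro ⟨-, h, -⟩; exact absurd rfl h
      · rintro ⟨⟨h, -⟩, -⟩; exact absurd h (by omega)

lemma exists_decomp {x : α} {w : List α} (hx : x ∈ w) :
    ∃ (B0 : List α) (Bs : List (List α)) (Bk : List α),
      w = B0 ++ [x] ++ (Bs.map (· ++ [x])).flatten ++ Bk ∧
      x ∉ B0 ∧ (∀ B ∈ Bs, x ∉ B) ∧ x ∉ Bk ∧ w.count x = 1 + Bs.length := by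
  induction w with
  | nil => simp at hx
  | cons c t ih =>
    by_cases hc : c = x
    · subst hc
      by_cases hct : c ∈ t
      · obtain ⟨B0, Bs, Bk, he, h0, hs, hk, hcnt⟩ := ih hct
        refine ⟨[], B0 :: Bs, Bk, ?_, by simp, ?_, hk, ?_⟩
        · rw [he]; simp
        · intro B hB
          rcases List.mem_cons.mp hB with rfl | hB'
          · exact h0
          · exact hs B hB'
        · rw [List.count_cons_self, hcnt]; simp; omega
      · refine ⟨[], [], t, by simp, by simp, by simp, hct, ?_⟩
        rw [List.count_cons_self, List.count_eq_zero.mpr hct]; rfl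
    · have hct : x ∈ t := by
        rcases List.mem_cons.mp hx with h | h
        · exact absurd h.symm hc
        · exact h
      obtain ⟨B0, Bs, Bk, he, h0, hs, hk, hcnt⟩ := ih hct
      refine ⟨c :: B0, Bs, Bk, ?_, ?_, hs, hk, ?_⟩
      · rw [he]; simp
      · intro hmem
        rcases List.mem_cons.mp hmem with h | h
        · exact hc h.symm
        · exact h0 h
      · rw [List.count_cons_of_ne hc, hcnt]

lemma pf_flatten (a b : α) (Ms : List (List α)) :
    pf a b Ms.flatten = (Ms.map (pf a b)).flatten := by
  induction Ms with
  | nil => rfl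
  | cons M t ih =>
    rw [List.flatten_cons, List.map_cons, List.flatten_cons, ← ih]
    exact List.filter_append _ _

lemma pf_single_x (x y : α) : pf x y [x] = [x] := by
  rw [pf_cons_of_left]; rfl

lemma pf_x_decomp {x y : α} {B0 Bk : List α} {Bs : List (List α)}
    (h0 : x ∉ B0) (hs : ∀ B ∈ Bs, x ∉ B) (hk : x ∉ Bk) :
    pf x y (B0 ++ [x] ++ (Bs.map (· ++ [x])).flatten ++ Bk) =
      List.replicate (B0.count y) y ++
        x :: (((Bs.map (List.count y)).map (fun c => List.replicate c y ++ [x])).flatten ++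
          List.replicate (Bk.count y) y) := by
  have hpf : ∀ B : List α, x ∉ B → pf x y B = List.replicate (B.count y) y :=
    fun B hB => pf_of_not_mem_left hB
  rw [show pf x y (B0 ++ [x] ++ (Bs.map (· ++ [x])).flatten ++ Bk) =
      pf x y B0 ++ pf x y [x] ++ pf x y (Bs.map (· ++ [x])).flatten ++ pf x y Bk by
    simp only [pf]; simp [List.filter_append]]
  rw [hpf B0 h0, hpf Bk hk, pf_single_x, pf_flatten, List.map_map, List.map_map]
  have : (Bs.map (pf x y ∘ fun B => B ++ [x])) =
      Bs.map ((fun c => List.replicate c y ++ [x]) ∘ List.count y) := by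
    apply List.map_congr_left
    intro B hB
    simp only [Function.comp_apply]
    rw [show pf x y (B ++ [x]) = pf x y B ++ pf x y [x] from List.filter_append _ _,
      pf_single_x, hpf B (hs B hB)]
  rw [this]
  simp [List.append_assoc]

lemma alternate_x_iff {x y : α} (hxy : x ≠ y) {B0 Bk : List α} {Bs : List (List α)}
    (h0 : x ∉ B0) (hs : ∀ B ∈ Bs, x ∉ B) (hk : x ∉ Bk) :
    List.Chain' (· ≠ ·) (pf x y (B0 ++ [x] ++ (Bs.map (· ++ [x])).flatten ++ Bk)) ↔
      B0.count y ≤ 1 ∧ (∀ B ∈ Bs, B.count y = 1) ∧ Bk.count y ≤ 1 := by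
  rw [pf_x_decomp h0 hs hk, chain'_append_compat]
  rw [chain'_replicate_iff, chain'_xpattern_iff hxy]
  constructor
  · rintro ⟨h1, ⟨h2, h3⟩, -⟩
    refine ⟨h1, ?_, h3⟩
    intro B hB
    exact h2 _ (List.mem_map_of_mem hB)
  · rintro ⟨h1, h2, h3⟩
    refine ⟨h1, ⟨?_, h3⟩, ?_⟩
    · intro c hc
      obtain ⟨B, hB, rfl⟩ := List.mem_map.mp hc
      exact h2 B hB
    · intro p hp q hq
      have := List.eq_of_mem_replicate (List.mem_of_mem_getLast? hp)
      subst this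
      simp only [List.head?_cons, Option.mem_def, Option.some.injEq] at hq
      subst hq
      exact Ne.symm hxy

/-- The structural condition for a pair `y z` (in this orientation). -/
def Pcond (B0 : List α) (Bs : List (List α)) (Bk : List α) (y z : α) : Prop :=
  (∀ B ∈ Bs, pf y z B = [y, z]) ∧ (pf y z B0).getLast? ≠ some y ∧ (pf y z Bk).head? ≠ some z

lemma chain'_pf_of_counts {y z : α} (hyz : y ≠ z) {B : List α}
    (hy : B.count y ≤ 1) (hz : B.count z ≤ 1) : List.Chain' (· ≠ ·) (pf y z B) := by
  rcases pf_cases hyz hy hz with h | h | h | h | h <;> rw [h] <;>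
    simp [hyz, Ne.symm hyz]

lemma pf_pair_decomp {x y z : α} (hyx : y ≠ x) (hzx : z ≠ x)
    (B0 Bk : List α) (Bs : List (List α)) :
    pf y z (B0 ++ [x] ++ (Bs.map (· ++ [x])).flatten ++ Bk) =
      pf y z B0 ++ ((Bs.map (pf y z)).flatten ++ pf y z Bk) := by
  have h1 : pf y z [x] = [] := pf_cons_of_ne [] (Ne.symm hyx) (Ne.symm hzx) |>.trans rfl
  have h2 : ∀ B : List α, pf y z (B ++ [x]) = pf y z B := by
    intro B
    rw [show pf y z (B ++ [x]) = pf y z B ++ pf y z [x] from List.filter_append _ _, h1,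
      List.append_nil]
  have e : ∀ (u v : List α), pf y z (u ++ v) = pf y z u ++ pf y z v :=
    fun u v => List.filter_append _ _
  rw [e, e, e, h1, pf_flatten, List.map_map]
  have : Bs.map (pf y z ∘ fun B => B ++ [x]) = Bs.map (pf y z) :=
    List.map_congr_left fun B _ => h2 B
  rw [this]
  simp [List.append_assoc]

lemma alternate_pair_iff {x y z : α} (hyz : y ≠ z) (hyx : y ≠ x) (hzx : z ≠ x)
    {B0 Bk : List α} {Bs : List (List α)} (hBs : Bs ≠ [])
    (cy0 : B0.count y ≤ 1) (cz0 : B0.count z ≤ 1)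
    (cys : ∀ B ∈ Bs, B.count y = 1) (czs : ∀ B ∈ Bs, B.count z = 1)
    (cyk : Bk.count y ≤ 1) (czk : Bk.count z ≤ 1) :
    List.Chain' (· ≠ ·) (pf y z (B0 ++ [x] ++ (Bs.map (· ++ [x])).flatten ++ Bk)) ↔
      Pcond B0 Bs Bk y z ∨ Pcond B0 Bs Bk z y := by
  rw [pf_pair_decomp hyx hzx, chain'_append_compat, chain'_append_compat]
  have hMne : Bs.map (pf y z) ≠ [] := by simpa using hBs
  have hsh : ∀ M ∈ Bs.map (pf y z), M = [y, z] ∨ M = [z, y] := by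
    intro M hM
    obtain ⟨B, hB, rfl⟩ := List.mem_map.mp hM
    exact pf_of_count_one_one hyz (cys B hB) (czs B hB)
  rw [chain'_flatten_iff hyz hMne hsh]
  constructor
  · rintro ⟨-, ⟨hall | hall, hC, hcond2⟩, hcond1⟩
    · left
      refine ⟨?_, ?_, ?_⟩
      · intro B hB
        exact hall _ (List.mem_map_of_mem hB)
      · rw [← opt_forall_ne]
        intro p hp
        have hq : ((Bs.map (pf y z)).flatten ++ pf y z Bk).head? = some y := by
          rw [List.head?_append, flatten_head_of_all hMne hall]; rfl
        exact hcond1 p hp y (by rw [hq]; rfl)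
      · rw [← opt_forall_ne']
        intro q hq
        exact hcond2 z (by rw [flatten_last_of_all hMne hall]; rfl) q hq
    · right
      refine ⟨?_, ?_, ?_⟩
      · intro B hB
        rw [← pf_symm]
        exact hall _ (List.mem_map_of_mem hB)
      · rw [← pf_symm, ← opt_forall_ne]
        intro p hp
        have hq : ((Bs.map (pf y z)).flatten ++ pf y z Bk).head? = some z := by
          rw [List.head?_append, flatten_head_of_all (a := z) (b := y) hMne hall]; rfl
        exact hcond1 p hp z (by rw [hq]; rfl)
      · rw [← pf_symm, ← opt_forall_ne']
        intro q hq
        exact hcond2 y (by rw [flatten_last_of_all (a := z) (b := y) hMne hall]; rfl) q hq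
  · rintro (⟨hall, h0, hk⟩ | ⟨hall, h0, hk⟩)
    · have hall' : ∀ M ∈ Bs.map (pf y z), M = [y, z] := by
        intro M hM
        obtain ⟨B, hB, rfl⟩ := List.mem_map.mp hM
        exact hall B hB
      refine ⟨chain'_pf_of_counts hyz cy0 cz0, ⟨Or.inl hall', chain'_pf_of_counts hyz cyk czk, ?_⟩, ?_⟩
      · intro p hp q hq
        rw [flatten_last_of_all hMne hall'] at hp
        simp only [Option.mem_def, Option.some.injEq] at hp
        subst hp
        exact fun h => hk (by rw [← h] at hq; exact hq)
      · intro p hp q hq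
        rw [List.head?_append, flatten_head_of_all hMne hall'] at hq
        simp only [Option.or, Option.mem_def, Option.some.injEq] at hq
        subst hq
        exact fun h => h0 (by rw [h] at hp; exact hp)
    · have hall' : ∀ M ∈ Bs.map (pf y z), M = [z, y] := by
        intro M hM
        obtain ⟨B, hB, rfl⟩ := List.mem_map.mp hM
        exact (pf_symm y z B).trans (hall B hB)
      have h0' : (pf y z B0).getLast? ≠ some z := by rw [pf_symm y z]; exact h0
      have hk' : (pf y z Bk).head? ≠ some y := by rw [pf_symm y z]; exact hk
      refine ⟨chain'_pf_of_counts hyz cy0 cz0, ⟨Or.inr hall', chain'_pf_of_counts hyz cyk czk, ?_⟩, ?_⟩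
      · intro p hp q hq
        rw [flatten_last_of_all (a := z) (b := y) hMne hall'] at hp
        simp only [Option.mem_def, Option.some.injEq] at hp
        subst hp
        exact fun h => hk' (by rw [← h] at hq; exact hq)
      · intro p hp q hq
        rw [List.head?_append, flatten_head_of_all (a := z) (b := y) hMne hall'] at hq
        simp only [Option.or, Option.mem_def, Option.some.injEq] at hq
        subst hq
        exact fun h => h0' (by rw [h] at hp; exact hp)

lemma count_eq_one_of_mem_le {a : α} {l : List α} (h : l.count a ≤ 1) (hm : a ∈ l) :
    l.count a = 1 := by
  have := List.count_pos_iff.mpr hm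
  omega

lemma Pcond_trans {y z u : α} (hyz : y ≠ z) (hzu : z ≠ u) (hyu : y ≠ u)
    {B0 Bk : List α} {Bs : List (List α)}
    (cy0 : B0.count y ≤ 1) (cz0 : B0.count z ≤ 1) (cu0 : B0.count u ≤ 1)
    (cys : ∀ B ∈ Bs, B.count y = 1) (czs : ∀ B ∈ Bs, B.count z = 1)
    (cus : ∀ B ∈ Bs, B.count u = 1)
    (cyk : Bk.count y ≤ 1) (czk : Bk.count z ≤ 1) (cuk : Bk.count u ≤ 1)
    (h1 : Pcond B0 Bs Bk y z) (h2 : Pcond B0 Bs Bk z u) : Pcond B0 Bs Bk y u := by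
  obtain ⟨h1s, h10, h1k⟩ := h1
  obtain ⟨h2s, h20, h2k⟩ := h2
  refine ⟨?_, ?_, ?_⟩
  · intro B hB
    exact pf_trans hyz hzu hyu (cys B hB) (czs B hB) (cus B hB) (h1s B hB) (h2s B hB)
  · rw [pf_getLast_iff hyu cy0 cu0]
    intro hy
    obtain ⟨hz, hyzB⟩ := (pf_getLast_iff hyz cy0 cz0).mp h10 hy
    obtain ⟨hu, hzuB⟩ := (pf_getLast_iff hzu cz0 cu0).mp h20 hz
    exact ⟨hu, pf_trans hyz hzu hyu (count_eq_one_of_mem_le cy0 hy)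
      (count_eq_one_of_mem_le cz0 hz) (count_eq_one_of_mem_le cu0 hu) hyzB hzuB⟩
  · rw [pf_head_iff hyu cyk cuk]
    intro hu
    obtain ⟨hz, hzuB⟩ := (pf_head_iff hzu czk cuk).mp h2k hu
    obtain ⟨hy, hyzB⟩ := (pf_head_iff hyz cyk czk).mp h1k hz
    exact ⟨hy, pf_trans hyz hzu hyu (count_eq_one_of_mem_le cyk hy)
      (count_eq_one_of_mem_le czk hz) (count_eq_one_of_mem_le cuk hu) hyzB hzuB⟩

lemma getLast?_filter_dedup (p : α → Bool) (w : List α) :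
    (w.dedup.filter p).getLast? = (w.filter p).getLast? := by
  induction w with
  | nil => rfl
  | cons c t ih =>
    by_cases hct : c ∈ t
    · rw [List.dedup_cons_of_mem hct]
      by_cases hp : p c
      · rw [List.filter_cons_of_pos hp]
        have hne : t.filter p ≠ [] := List.ne_nil_of_mem (List.mem_filter.mpr ⟨hct, hp⟩)
        obtain ⟨d, L', hL⟩ := List.exists_cons_of_ne_nil hne
        rw [ih, hL, List.getLast?_cons_cons]
      · rw [List.filter_cons_of_neg hp, ih]
    · rw [List.dedup_cons_of_notMem hct]
      by_cases hp : p c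
      · rw [List.filter_cons_of_pos hp, List.filter_cons_of_pos hp]
        rcases eq_or_ne (t.filter p) [] with h | h
        · have h2 : (t.dedup.filter p) = [] := by
            rw [List.eq_nil_iff_forall_not_mem] at h ⊢
            intro m hm
            have hm' := List.mem_filter.mp hm
            exact h m (List.mem_filter.mpr ⟨List.mem_dedup.mp hm'.1, hm'.2⟩)
          rw [h, h2]
        · have h2 : (t.dedup.filter p) ≠ [] := by
            obtain ⟨m, hm⟩ := List.exists_mem_of_ne_nil _ h
            have hm' := List.mem_filter.mp hm
            exact List.ne_nil_of_mem (List.mem_filter.mpr ⟨List.mem_dedup.mpr hm'.1, hm'.2⟩)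
          obtain ⟨d, L', hL⟩ := List.exists_cons_of_ne_nil h2
          obtain ⟨d', L'', hL'⟩ := List.exists_cons_of_ne_nil h
          rw [hL, hL', List.getLast?_cons_cons, List.getLast?_cons_cons, ← hL, ← hL', ih]
      · rw [List.filter_cons_of_neg hp, List.filter_cons_of_neg hp, ih]

lemma pf_dedup_getLast (y z : α) (w : List α) :
    (pf y z w.dedup).getLast? = (pf y z w).getLast? :=
  getLast?_filter_dedup _ w

lemma chain'_pf_append_dedup {y z : α} (hyz : y ≠ z) {w : List α} (hy : y ∈ w) (hz : z ∈ w) :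
    List.Chain' (· ≠ ·) (pf y z (w ++ w.dedup)) ↔ List.Chain' (· ≠ ·) (pf y z w) := by
  rw [show pf y z (w ++ w.dedup) = pf y z w ++ pf y z w.dedup from List.filter_append _ _,
    chain'_append_compat]
  constructor
  · exact fun h => h.1
  · intro h
    have cy : w.dedup.count y = 1 := by rw [List.count_dedup]; simp [hy]
    have cz : w.dedup.count z = 1 := by rw [List.count_dedup]; simp [hz]
    rcases pf_of_count_one_one hyz cy cz with hd | hd
    · refine ⟨h, by rw [hd]; simp [hyz], ?_⟩
      intro p hp q hq
      have : (pf y z w).getLast? = some z := by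
        rw [← pf_dedup_getLast, hd]; rfl
      rw [this] at hp
      rw [hd] at hq
      simp only [Option.mem_def, Option.some.injEq, List.head?_cons] at hp hq
      subst hp; subst hq
      exact Ne.symm hyz
    · refine ⟨h, by rw [hd]; simp [Ne.symm hyz], ?_⟩
      intro p hp q hq
      have : (pf y z w).getLast? = some y := by
        rw [← pf_dedup_getLast, hd]; rfl
      rw [this] at hp
      rw [hd] at hq
      simp only [Option.mem_def, Option.some.injEq, List.head?_cons] at hp hq
      subst hp; subst hq
      exact hyz

lemma pf_sublist (a b : α) (l : List α) : pf a b l <+ l := List.filter_sublist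

lemma pf_sorted {s : α → α → Prop} (hanti : ∀ p q, s p q → s q p → p = q)
    {L : List α} (hsort : List.Pairwise s L) (hnd : L.Nodup)
    {a b : α} (ha : a ∈ L) (hb : b ∈ L) (hab : a ≠ b) (hs : s a b) :
    pf a b L = [a, b] := by
  rcases pf_of_count_one_one hab (List.count_eq_one_of_mem hnd ha)
    (List.count_eq_one_of_mem hnd hb) with h | h
  · exact h
  · exfalso
    have hsub : List.Pairwise s (pf a b L) := List.Pairwise.sublist (pf_sublist a b L) hsort
    rw [h] at hsub
    simp only [List.pairwise_cons, List.mem_singleton, forall_eq] at hsub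
    exact hab (hanti a b hs hsub.1)

lemma pf_map {β : Type*} [DecidableEq β] {f : β → α} (hf : Function.Injective f)
    (a b : β) (L : List β) :
    pf (f a) (f b) (L.map f) = (pf a b L).map f := by
  unfold pf
  rw [List.filter_map]
  congr 1
  apply List.filter_congr
  intro c _
  simp only [Function.comp_apply, decide_eq_decide, hf.eq_iff]

lemma not_mem_map_val {β : Type*} {f : β → α} {x : α} (h : ∀ c : β, f c ≠ x) (L : List β) :
    x ∉ L.map f := by
  intro hm
  obtain ⟨c, -, hc⟩ := List.mem_map.mp hm
  exact h c hc

section LinExt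
variable {β : Type*} {D : β → β → Prop}

lemma exists_linext (htr : ∀ {a b c}, D a b → D b c → D a c)
    (hasym : ∀ {a b}, D a b → ¬ D b a) :
    ∃ s, IsLinearOrder β s ∧ ∀ a b, D a b → s a b := by
  let r : β → β → Prop := fun a b => D a b ∨ a = b
  haveI : IsRefl β r := ⟨fun a => Or.inr rfl⟩
  haveI : IsTrans β r := ⟨fun a b c hab hbc => by
    rcases hab with h | rfl
    · rcases hbc with h' | rfl
      · exact Or.inl (htr h h')
      · exact Or.inl h
    · exact hbc⟩
  haveI : IsAntisymm β r := ⟨fun a b hab hba => by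
    rcases hab with h | rfl
    · rcases hba with h' | rfl
      · exact absurd h' (hasym h)
      · rfl
    · rfl⟩
  haveI : IsPartialOrder β r := {}
  obtain ⟨s, hls, hrs⟩ := extend_partialOrder r
  exact ⟨s, hls, fun a b h => hrs a b (Or.inl h)⟩

lemma exists_linext_pair (htr : ∀ {a b c}, D a b → D b c → D a c)
    (hasym : ∀ {a b}, D a b → ¬ D b a) {p q : β} (hpq : p ≠ q)
    (h1 : ¬ D p q) (h2 : ¬ D q p) :
    ∃ s, IsLinearOrder β s ∧ (∀ a b, D a b → s a b) ∧ s p q := by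
  let D' : β → β → Prop := fun a b => D a b ∨ ((D a p ∨ a = p) ∧ (D q b ∨ q = b))
  have hkey : ∀ a, (D q a ∨ q = a) → (D a p ∨ a = p) → False := by
    intro a hqa hap
    rcases hqa with h | rfl
    · rcases hap with h' | rfl
      · exact h2 (htr h h')
      · exact h2 h
    · rcases hap with h' | rfl
      · exact h2 h'
      · exact hpq rfl
  have htr' : ∀ {a b c}, D' a b → D' b c → D' a c := by
    intro a b c hab hbc
    rcases hab with h | ⟨hap, hqb⟩
    · rcases hbc with h' | ⟨hbp, hqc⟩
      · exact Or.inl (htr h h')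
      · refine Or.inr ⟨?_, hqc⟩
        rcases hbp with h'' | rfl
        · exact Or.inl (htr h h'')
        · exact Or.inl h
    · rcases hbc with h' | ⟨hbp, hqc⟩
      · refine Or.inr ⟨hap, ?_⟩
        rcases hqb with h'' | rfl
        · exact Or.inl (htr h'' h')
        · exact Or.inl h'
      · exact absurd (hkey b hqb hbp) id
  have hasym' : ∀ {a b}, D' a b → D' b a → False := by
    intro a b hab hba
    rcases hab with h | ⟨hap, hqb⟩
    · rcases hba with h' | ⟨hbp, hqa⟩
      · exact hasym h h'
      · refine hkey a hqa ?_
        rcases hbp with h'' | rfl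
        · exact Or.inl (htr h h'')
        · exact Or.inl h
    · rcases hba with h' | ⟨hbp, hqa⟩
      · refine hkey b hqb ?_
        rcases hap with h'' | rfl
        · exact Or.inl (htr h' h'')
        · exact Or.inl h'
      · exact hkey a hqa hap
  let r : β → β → Prop := fun a b => D' a b ∨ a = b
  haveI : IsRefl β r := ⟨fun a => Or.inr rfl⟩
  haveI : IsTrans β r := ⟨fun a b c hab hbc => by
    rcases hab with h | rfl
    · rcases hbc with h' | rfl
      · exact Or.inl (htr' h h')
      · exact Or.inl h
    · exact hbc⟩
  haveI : IsAntisymm β r := ⟨fun a b hab hba => by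
    rcases hab with h | rfl
    · rcases hba with h' | rfl
      · exact absurd (hasym' h h') id
      · rfl
    · rfl⟩
  haveI : IsPartialOrder β r := {}
  obtain ⟨s, hls, hrs⟩ := extend_partialOrder r
  exact ⟨s, hls, fun a b h => hrs a b (Or.inl (Or.inl h)),
    hrs p q (Or.inl (Or.inr ⟨Or.inr rfl, Or.inr rfl⟩))⟩

end LinExt

end WordGraphHelpers

section Fwd
open List

lemma alternate_eq_pf {V : Type*} [DecidableEq V] (w : List V) (i j : V) :
    Alternate w i j ↔ List.Chain' (· ≠ ·) (pf i j w) := Iff.rfl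

theorem forward_dir {V : Type*} [Fintype V] [DecidableEq V] (G : SimpleGraph V) (x : V)
    (hx : ∀ v, v ≠ x → G.Adj x v) (hrep : WordRepresentable G) :
    IsComparability (G.induce {v | v ≠ x}) := by
  classical
  obtain ⟨w, hwmem, hwalt⟩ := hrep
  set w2 := w ++ w.dedup with hw2def
  have hmem2 : ∀ v, v ∈ w2 := fun v => List.mem_append.mpr (Or.inl (hwmem v))
  have halt2 : ∀ i j : V, i ≠ j → (Alternate w2 i j ↔ G.Adj i j) := by
    intro i j hij
    rw [alternate_eq_pf, hw2def, chain'_pf_append_dedup hij (hwmem i) (hwmem j)]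
    exact hwalt i j hij
  obtain ⟨B0, Bs, Bk, heq, h0, hs, hk, hcnt⟩ := exists_decomp (hmem2 x)
  have hcx : 2 ≤ w2.count x := by
    rw [hw2def, List.count_append, List.count_dedup]
    have : 0 < w.count x := List.count_pos_iff.mpr (hwmem x)
    simp only [hwmem x, if_pos]
    omega
  have hBs : Bs ≠ [] := by
    intro hnil
    rw [hnil] at hcnt
    simp at hcnt
    omega
  have hocc : ∀ y, y ≠ x → B0.count y ≤ 1 ∧ (∀ B ∈ Bs, B.count y = 1) ∧ Bk.count y ≤ 1 := by
    intro y hy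
    have ha : Alternate w2 x y := (halt2 x y (Ne.symm hy)).mpr (hx y hy)
    have hc : List.Chain' (· ≠ ·) (pf x y (B0 ++ [x] ++ (Bs.map (· ++ [x])).flatten ++ Bk)) := by
      rw [← heq]
      exact ha
    exact (alternate_x_iff (Ne.symm hy) h0 hs hk).mp hc
  set B1 := Bs.head hBs with hB1def
  have hB1mem : B1 ∈ Bs := List.head_mem hBs
  have hvx : ∀ c : ↥({v : V | v ≠ x}), c.1 ≠ x := fun c => c.2
  -- the alternation characterization for pairs of non-x vertices
  have hchar : ∀ (a b : ↥({v : V | v ≠ x})), a.1 ≠ b.1 →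
      (Alternate w2 a.1 b.1 ↔ Pcond B0 Bs Bk a.1 b.1 ∨ Pcond B0 Bs Bk b.1 a.1) := by
    intro a b hab
    rw [alternate_eq_pf, heq]
    exact alternate_pair_iff hab (hvx a) (hvx b) hBs
      (hocc _ (hvx a)).1 (hocc _ (hvx b)).1 (hocc _ (hvx a)).2.1 (hocc _ (hvx b)).2.1
      (hocc _ (hvx a)).2.2 (hocc _ (hvx b)).2.2
  have hPo : ∀ (a b : ↥({v : V | v ≠ x})), a.1 ≠ b.1 → G.Adj a.1 b.1 →
      pf a.1 b.1 B1 = [a.1, b.1] → Pcond B0 Bs Bk a.1 b.1 := by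
    intro a b hab hadj hB1
    rcases (hchar a b hab).mp ((halt2 _ _ hab).mpr hadj) with hP | hP
    · exact hP
    · exfalso
      have := hP.1 B1 hB1mem
      rw [← pf_symm, hB1] at this
      simp at this
      exact hab this.1
  refine ⟨fun a b => G.Adj a.1 b.1 ∧ pf a.1 b.1 B1 = [a.1, b.1], ⟨?_, ?_⟩, ?_⟩
  · intro a b hab
    exact hab.1
  · intro a b hadj
    have hGadj : G.Adj a.1 b.1 := hadj
    have hab : a.1 ≠ b.1 := hGadj.ne
    have c1 : B1.count a.1 = 1 := (hocc _ (hvx a)).2.1 B1 hB1mem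
    have c2 : B1.count b.1 = 1 := (hocc _ (hvx b)).2.1 B1 hB1mem
    rcases pf_of_count_one_one hab c1 c2 with hcase | hcase
    · constructor
      · rintro - ⟨-, hba⟩
        rw [← pf_symm, hcase] at hba
        simp at hba
        exact hab hba.1
      · intro _
        exact ⟨hGadj, hcase⟩
    · constructor
      · rintro ⟨-, hba⟩
        rw [hcase] at hba
        simp at hba
        exact absurd hba.1 (Ne.symm hab)
      · intro hnb
        exfalso
        exact hnb ⟨hGadj.symm, (pf_symm b.1 a.1 B1).trans hcase⟩
  · rintro a b c ⟨hGab, hab1⟩ ⟨hGbc, hbc1⟩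
    have nab : a.1 ≠ b.1 := hGab.ne
    have nbc : b.1 ≠ c.1 := hGbc.ne
    have nac : a.1 ≠ c.1 := by
      intro h
      rw [← h] at hbc1
      have : pf a.1 b.1 B1 = [b.1, a.1] := (pf_symm a.1 b.1 B1).trans hbc1
      rw [hab1] at this
      simp at this
      exact nab this.1
    have hPab : Pcond B0 Bs Bk a.1 b.1 := hPo a b nab hGab hab1
    have hPbc : Pcond B0 Bs Bk b.1 c.1 := hPo b c nbc hGbc hbc1
    have hPac : Pcond B0 Bs Bk a.1 c.1 :=
      Pcond_trans nab nbc nac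
        (hocc _ (hvx a)).1 (hocc _ (hvx b)).1 (hocc _ (hvx c)).1
        (hocc _ (hvx a)).2.1 (hocc _ (hvx b)).2.1 (hocc _ (hvx c)).2.1
        (hocc _ (hvx a)).2.2 (hocc _ (hvx b)).2.2 (hocc _ (hvx c)).2.2
        hPab hPbc
    have haltac : Alternate w2 a.1 c.1 := (hchar a c nac).mpr (Or.inl hPac)
    have hGac : G.Adj a.1 c.1 := (halt2 _ _ nac).mp haltac
    exact ⟨hGac, hPac.1 B1 hB1mem⟩

end Fwd

section Bwd
open List

lemma sorted_block_props {β : Type*} [Fintype β] [DecidableEq β]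
    (s : β → β → Prop) (hs : IsLinearOrder β s) :
    (@List.insertionSort β s (Classical.decRel _) Finset.univ.toList).Nodup ∧
      (∀ c : β, c ∈ @List.insertionSort β s (Classical.decRel _) Finset.univ.toList) ∧
      List.Pairwise s (@List.insertionSort β s (Classical.decRel _) Finset.univ.toList) := by
  haveI := hs
  have hperm := @List.perm_insertionSort β s (Classical.decRel _) Finset.univ.toList
  refine ⟨hperm.nodup_iff.mpr (Finset.nodup_toList _), ?_, ?_⟩
  · intro c
    exact hperm.mem_iff.mpr (Finset.mem_toList.mpr (Finset.mem_univ c))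
  · exact @List.pairwise_insertionSort β s (Classical.decRel _) _ _ Finset.univ.toList

theorem backward_dir {V : Type*} [Fintype V] [DecidableEq V] (G : SimpleGraph V) (x : V)
    (hx : ∀ v, v ≠ x → G.Adj x v) (hcomp : IsComparability (G.induce {v | v ≠ x})) :
    WordRepresentable G := by
  classical
  obtain ⟨D, ⟨hD1, hD2⟩, hDtr⟩ := hcomp
  have hvx : ∀ c : ↥({v : V | v ≠ x}), c.1 ≠ x := fun c => c.2
  have hDadj : ∀ a b, D a b → G.Adj a.1 b.1 := fun a b h => hD1 a b h
  have hasym : ∀ {a b}, D a b → ¬ D b a := fun {a b} h => (hD2 a b (hD1 a b h)).mp h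
  have htr : ∀ {a b c}, D a b → D b c → D a c := fun {a b c} h h' => hDtr a b c h h'
  -- linear orders
  obtain ⟨s0, hs01, hs02⟩ := exists_linext @htr @hasym
  have hall : ∀ pq : (↥({v : V | v ≠ x})) × (↥({v : V | v ≠ x})),
      ∃ s, IsLinearOrder _ s ∧ (∀ a b, D a b → s a b) ∧
        ((pq.1 ≠ pq.2 ∧ ¬D pq.1 pq.2 ∧ ¬D pq.2 pq.1) → s pq.1 pq.2) := by
    intro pq
    by_cases hc : pq.1 ≠ pq.2 ∧ ¬D pq.1 pq.2 ∧ ¬D pq.2 pq.1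
    · obtain ⟨s, h1, h2, h3⟩ := exists_linext_pair @htr @hasym hc.1 hc.2.1 hc.2.2
      exact ⟨s, h1, h2, fun _ => h3⟩
    · obtain ⟨s, h1, h2⟩ := exists_linext @htr @hasym
      exact ⟨s, h1, h2, fun h => absurd h hc⟩
  choose F hF1 hF2 hF3 using hall
  set sortOf : ((↥({v : V | v ≠ x})) × (↥({v : V | v ≠ x}))) → List ↥({v : V | v ≠ x}) :=
    fun pq => @List.insertionSort _ (F pq) (Classical.decRel _) Finset.univ.toList with hsortOf
  set L0 : List ↥({v : V | v ≠ x}) :=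
    @List.insertionSort _ s0 (Classical.decRel _) Finset.univ.toList with hL0
  set Lsβ : List (List ↥({v : V | v ≠ x})) :=
    L0 :: (Finset.univ.toList.map sortOf) with hLsβ
  set Bsv : List (List V) := Lsβ.map (fun L => L.map Subtype.val) with hBsv
  set w : List V := [] ++ [x] ++ (Bsv.map (· ++ [x])).flatten ++ [] with hwdef
  -- block properties
  have hblocks : ∀ B ∈ Bsv, ∃ (s : _ → _ → Prop) (L : List ↥({v : V | v ≠ x})),
      IsLinearOrder _ s ∧ (∀ a b, D a b → s a b) ∧ B = L.map Subtype.val ∧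
        L.Nodup ∧ (∀ c, c ∈ L) ∧ List.Pairwise s L := by
    intro B hB
    obtain ⟨L, hL, rfl⟩ := List.mem_map.mp hB
    rcases List.mem_cons.mp hL with rfl | hL'
    · obtain ⟨hnd, hmem, hpw⟩ := sorted_block_props s0 hs01
      exact ⟨s0, L0, hs01, hs02, rfl, hnd, hmem, hpw⟩
    · obtain ⟨pq, -, rfl⟩ := List.mem_map.mp hL'
      obtain ⟨hnd, hmem, hpw⟩ := sorted_block_props (F pq) (hF1 pq)
      exact ⟨F pq, sortOf pq, hF1 pq, hF2 pq, rfl, hnd, hmem, hpw⟩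
  have hBsne : Bsv ≠ [] := by simp [hBsv, hLsβ]
  have hxnotin : ∀ B ∈ Bsv, x ∉ B := by
    intro B hB
    obtain ⟨s, L, -, -, rfl, -, -, -⟩ := hblocks B hB
    exact not_mem_map_val hvx L
  -- counts of non-x vertices in blocks
  have hcount : ∀ (a : ↥({v : V | v ≠ x})), ∀ B ∈ Bsv, B.count a.1 = 1 := by
    intro a B hB
    obtain ⟨s, L, -, -, rfl, hnd, hmem, -⟩ := hblocks B hB
    rw [List.count_map_of_injective L Subtype.val Subtype.val_injective a]
    exact List.count_eq_one_of_mem hnd (hmem a)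
  -- ordering within blocks
  have hord : ∀ (a b : ↥({v : V | v ≠ x})), a ≠ b → D a b →
      ∀ B ∈ Bsv, pf a.1 b.1 B = [a.1, b.1] := by
    intro a b hab hD B hB
    obtain ⟨s, L, hls, hext, rfl, hnd, hmem, hpw⟩ := hblocks B hB
    have : pf a.1 b.1 (L.map Subtype.val) = (pf a b L).map Subtype.val :=
      pf_map Subtype.val_injective a b L
    rw [this, pf_sorted (fun p q h1 h2 => hls.toIsPartialOrder.toAntisymm.antisymm p q h1 h2)
      hpw hnd (hmem a) (hmem b) hab (hext a b hD)]
    rfl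
  refine ⟨w, ?_, ?_⟩
  · intro v
    by_cases hv : v = x
    · subst hv
      simp [hwdef]
    · have hmem0 : v ∈ L0.map Subtype.val := by
        obtain ⟨hnd, hmem, -⟩ := sorted_block_props s0 hs01
        exact List.mem_map.mpr ⟨⟨v, hv⟩, hmem _, rfl⟩
      rw [hwdef]
      simp only [List.nil_append, List.append_nil, List.cons_append, List.mem_cons]
      right
      rw [List.mem_flatten]
      refine ⟨L0.map Subtype.val ++ [x], ?_, List.mem_append_left _ hmem0⟩
      apply List.mem_map.mpr
      exact ⟨L0.map Subtype.val, by simp [hBsv, hLsβ], rfl⟩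
  · -- alternation
    have haltx : ∀ j : V, j ≠ x → Alternate w x j := by
      intro j hj
      rw [alternate_eq_pf, hwdef]
      refine (alternate_x_iff (Ne.symm hj) (by simp) hxnotin (by simp)).mpr ?_
      exact ⟨by simp, fun B hB => hcount ⟨j, hj⟩ B hB, by simp⟩
    have hpair : ∀ i j : V, i ≠ j → i ≠ x → j ≠ x → (Alternate w i j ↔ G.Adj i j) := by
      intro i j hij hi hj
      set a : ↥({v : V | v ≠ x}) := ⟨i, hi⟩ with ha
      set b : ↥({v : V | v ≠ x}) := ⟨j, hj⟩ with hb
      have hab : a ≠ b := fun h => hij (congrArg Subtype.val h)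
      have hchar : Alternate w i j ↔ Pcond [] Bsv [] i j ∨ Pcond [] Bsv [] j i := by
        rw [alternate_eq_pf, hwdef]
        exact alternate_pair_iff hij hi hj hBsne (by simp) (by simp)
          (fun B hB => hcount a B hB) (fun B hB => hcount b B hB) (by simp) (by simp)
      rw [hchar]
      constructor
      · rintro (hP | hP)
        · by_contra hnadj
          have hnD1 : ¬ D a b := fun h => hnadj (hDadj a b h)
          have hnD2 : ¬ D b a := fun h => hnadj (hDadj b a h).symm
          -- the block built for the pair (b, a) puts j before i
          have hmemblk : (sortOf (b, a)).map Subtype.val ∈ Bsv := by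
            apply List.mem_map.mpr
            refine ⟨sortOf (b, a), ?_, rfl⟩
            rw [hLsβ]
            exact List.mem_cons_of_mem _ (List.mem_map.mpr
              ⟨(b, a), Finset.mem_toList.mpr (Finset.mem_univ _), rfl⟩)
          have hsba : F (b, a) b a := hF3 (b, a) ⟨Ne.symm hab, hnD2, hnD1⟩
          obtain ⟨hnd, hmem, hpw⟩ := sorted_block_props (F (b, a)) (hF1 (b, a))
          have hji : pf j i ((sortOf (b, a)).map Subtype.val) = [j, i] := by
            have : pf b.1 a.1 ((sortOf (b, a)).map Subtype.val) =
                (pf b a (sortOf (b, a))).map Subtype.val :=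
              pf_map Subtype.val_injective b a (sortOf (b, a))
            rw [this, pf_sorted
              (fun p q h1 h2 => (hF1 (b, a)).toIsPartialOrder.toAntisymm.antisymm p q h1 h2)
              hpw hnd (hmem b) (hmem a) (Ne.symm hab) hsba]
            rfl
          have hij' := hP.1 _ hmemblk
          rw [← pf_symm, hji] at hij'
          simp at hij'
          exact hij hij'.2
        · by_contra hnadj
          have hnD1 : ¬ D a b := fun h => hnadj (hDadj a b h)
          have hnD2 : ¬ D b a := fun h => hnadj (hDadj b a h).symm
          have hmemblk : (sortOf (a, b)).map Subtype.val ∈ Bsv := by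
            apply List.mem_map.mpr
            refine ⟨sortOf (a, b), ?_, rfl⟩
            rw [hLsβ]
            exact List.mem_cons_of_mem _ (List.mem_map.mpr
              ⟨(a, b), Finset.mem_toList.mpr (Finset.mem_univ _), rfl⟩)
          have hsab : F (a, b) a b := hF3 (a, b) ⟨hab, hnD1, hnD2⟩
          obtain ⟨hnd, hmem, hpw⟩ := sorted_block_props (F (a, b)) (hF1 (a, b))
          have hij2 : pf i j ((sortOf (a, b)).map Subtype.val) = [i, j] := by
            have : pf a.1 b.1 ((sortOf (a, b)).map Subtype.val) =
                (pf a b (sortOf (a, b))).map Subtype.val :=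
              pf_map Subtype.val_injective a b (sortOf (a, b))
            rw [this, pf_sorted
              (fun p q h1 h2 => (hF1 (a, b)).toIsPartialOrder.toAntisymm.antisymm p q h1 h2)
              hpw hnd (hmem a) (hmem b) hab hsab]
            rfl
          have hji' := hP.1 _ hmemblk
          rw [← pf_symm, hij2] at hji'
          simp at hji'
          exact hij hji'.1
      · intro hadj
        have hadj' : (G.induce {v | v ≠ x}).Adj a b := hadj
        rcases Classical.em (D a b) with hD | hnD
        · left
          exact ⟨fun B hB => hord a b hab hD B hB, by simp [pf_nil], by simp [pf_nil]⟩
        · right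
          have hDba : D b a := by
            by_contra hnD2
            exact hnD ((hD2 a b hadj').mpr hnD2)
          exact ⟨fun B hB => hord b a (Ne.symm hab) hDba B hB, by simp [pf_nil], by simp [pf_nil]⟩
    intro i j hij
    by_cases hi : i = x
    · have hj : j ≠ x := fun h => hij (hi.trans h.symm)
      rw [hi]
      exact iff_of_true (haltx j hj) (hx j hj)
    · by_cases hj : j = x
      · rw [hj]
        refine iff_of_true ?_ (hx i hi).symm
        rw [alternate_eq_pf, pf_symm]
        exact (alternate_eq_pf _ _ _).mp (haltx i hi)
      · exact hpair i j hij hi hj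

end Bwd


/-- If `x` is adjacent to all other vertices of `G` and `H = G − x`, then `G`
is word-representable iff `H` is a comparability graph. -/
theorem stmt11 {V : Type*} [Fintype V] [DecidableEq V] (G : SimpleGraph V) (x : V)
    (hx : ∀ v, v ≠ x → G.Adj x v) :
    WordRepresentable G ↔ IsComparability (G.induce {v | v ≠ x}) := by
  exact ⟨forward_dir G x hx, backward_dir G x hx⟩
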